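/- Let 0 < ρ ≤ 1/4, let h satisfy 1 ≤ h ≤ 1/(2ρ), and let v be a complex number with |v| = 1 and |Re v| < T(h) = √(1 + ρ² − 2ρ/h). Then for any real s with 0 < s < 4h/(3ρ) and any real x with 1 − 3sρ/(4h) ≤ |x| ≤ 1, the Poisson kernel satisfies P(v;x) < s. -/

import Mathlib

open Real Set

set_option maxHeartbeats 1000000 in
theorem stmt7 (ρ : ℝ) (hρ0 : 0 < ρ) (hρ1 : ρ ≤ 1 / 4) (h : ℝ) (hh1 : 1 ≤ h)
    (hh2 : h ≤ 1 / (2 * ρ)) (v : ℂ) (hv : ‖v‖ = 1)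
    (hRe : |v.re| < Real.sqrt (1 + ρ ^ 2 - 2 * ρ / h)) (s : ℝ) (hs0 : 0 < s)
    (hs1 : s < 4 * h / (3 * ρ)) (x : ℝ) (hx1 : 1 - 3 * s * ρ / (4 * h) ≤ |x|)
    (hx2 : |x| ≤ 1) :
    (1 - x ^ 2) / (1 - 2 * x * v.re + x ^ 2) < s := by
  have hh0 : (0:ℝ) < h := by linarith
  have hρh : 2 * ρ * h ≤ 1 := by
    have h2ρ : (0:ℝ) < 2 * ρ := by linarith
    have := (le_div_iff₀ h2ρ).mp (by linarith [hh2] : h ≤ 1 / (2 * ρ))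
    linarith [this]
  have hc0 : (0:ℝ) ≤ |v.re| := abs_nonneg _
  have hA : 0 < 1 + ρ ^ 2 - 2 * ρ / h := Real.sqrt_pos.mp (lt_of_le_of_lt hc0 hRe)
  have hc2 : v.re ^ 2 < 1 + ρ ^ 2 - 2 * ρ / h := by
    have h1 := Real.sq_sqrt hA.le
    nlinarith [sq_abs v.re, Real.sqrt_nonneg (1 + ρ ^ 2 - 2 * ρ / h)]
  have hch : v.re ^ 2 * h < h + ρ ^ 2 * h - 2 * ρ := by
    have he : (1 + ρ ^ 2 - 2 * ρ / h) * h = h + ρ ^ 2 * h - 2 * ρ := by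
      field_simp
    nlinarith [hc2, hh0]
  have hc1 : v.re ^ 2 < 1 := by nlinarith [hch, hρh, hρ0, hh0]
  have hden : 0 < 1 - 2 * x * v.re + x ^ 2 := by
    nlinarith [sq_nonneg (x - v.re), hc1]
  have hnum : (1 - x ^ 2) * (2 * h) ≤ 3 * s * ρ := by
    have h1 : 1 - 3 * s * ρ / (4 * h) ≤ |x| := hx1
    have h4h : (0:ℝ) < 4 * h := by linarith
    have h2 : (1 - |x|) * (4 * h) ≤ 3 * s * ρ := by
      have : 1 - |x| ≤ 3 * s * ρ / (4 * h) := by linarith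
      calc (1 - |x|) * (4 * h) ≤ (3 * s * ρ / (4 * h)) * (4 * h) := by
            apply mul_le_mul_of_nonneg_right this h4h.le
        _ = 3 * s * ρ := by field_simp
    nlinarith [sq_abs x, hx2, hh0, abs_nonneg x, sq_nonneg (1 - |x|), mul_nonneg (sq_nonneg (1 - |x|)) hh0.le]
  have hdh : (1 - 2 * x * v.re + x ^ 2) * h > 2 * ρ - ρ ^ 2 * h := by
    have e : (1 - 2 * x * v.re + x ^ 2) * h
        = (x - v.re) ^ 2 * h + (h - v.re ^ 2 * h) := by ring
    linarith [e, mul_nonneg (sq_nonneg (x - v.re)) hh0.le, hch]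
  rw [div_lt_iff₀ hden]
  have key : s * ((1 - 2 * x * v.re + x ^ 2) * h) > s * (2 * ρ - ρ ^ 2 * h) :=
    (mul_lt_mul_iff_right₀ hs0).mpr hdh
  nlinarith [key, hnum, hh0,
    mul_nonneg (mul_pos hs0 hρ0).le (by linarith : (0:ℝ) ≤ 1 - 2 * ρ * h)]
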